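/- Every lattice Γ in ℂ has a generating pair (ω, ω′) (i.e. Γ = {m·ω + n·ω′ : m, n ∈ ℤ}) such that τ := ω′/ω satisfies Im τ > 0, −1/2 < Re τ ≤ 1/2, |τ| ≥ 1, and if |τ| = 1 then Re τ ≥ 0; moreover, for this pair the map z ↦ z/ω maps Γ bijectively onto the lattice Γ_τ = {m + n·τ : m, n ∈ ℤ}, so that it induces a biholomorphic map from the torus ℂ/Γ onto ℂ/Γ_τ. -/

import Mathlib

open Complex UpperHalfPlane ModularGroup Modular MatrixGroups

private lemma li_of_im (ω ω' : ℂ) (hω : ω ≠ 0) (h : (ω' / ω).im ≠ 0) :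
    LinearIndependent ℝ ![ω, ω'] := by
  rw [LinearIndependent.pair_iff]
  intro s t hst
  rw [Complex.real_smul, Complex.real_smul] at hst
  have h2 : (s : ℂ) + t * (ω' / ω) = 0 := by
    field_simp at hst ⊢
    linear_combination hst
  have him : (t : ℝ) * (ω' / ω).im = 0 := by
    have := congrArg Complex.im h2
    simpa using this
  have ht : t = 0 := by
    rcases mul_eq_zero.mp him with h' | h'
    · exact h'
    · exact absurd h' h
  subst ht
  simp only [Complex.ofReal_zero, zero_mul, add_zero, Complex.ofReal_eq_zero] at h2
  exact ⟨h2, rfl⟩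

private lemma gen_bijOn (ω ω' : ℂ) (hω : ω ≠ 0) :
    Set.BijOn (fun z => z / ω) {z : ℂ | ∃ m n : ℤ, z = m * ω + n * ω'}
      {z : ℂ | ∃ m n : ℤ, z = m + n * (ω' / ω)} := by
  refine ⟨?_, ?_, ?_⟩
  · rintro z ⟨m, n, rfl⟩
    exact ⟨m, n, by field_simp⟩
  · rintro x - y - h
    have := congrArg (· * ω) h
    simpa [div_mul_cancel₀, hω] using this
  · rintro w ⟨m, n, rfl⟩
    exact ⟨(m : ℂ) * ω + n * ω', ⟨m, n, rfl⟩, by field_simp⟩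

/-- the main reduction once τ is in the closed fundamental domain -/
private lemma final_step (Γ : Set ℂ) (ω ω' : ℂ)
    (hgen : Γ = {z : ℂ | ∃ m n : ℤ, z = m * ω + n * ω'})
    (him : 0 < (ω' / ω).im) (habs : 1 ≤ ‖ω' / ω‖)
    (hre : |(ω' / ω).re| ≤ 1 / 2) :
    ∃ ω ω' : ℂ, LinearIndependent ℝ ![ω, ω'] ∧
      Γ = {z : ℂ | ∃ m n : ℤ, z = m * ω + n * ω'} ∧
      0 < (ω' / ω).im ∧ -(1/2) < (ω' / ω).re ∧ (ω' / ω).re ≤ 1/2 ∧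
      1 ≤ ‖ω' / ω‖ ∧
      (‖ω' / ω‖ = 1 → 0 ≤ (ω' / ω).re) ∧
      Set.BijOn (fun z => z / ω) Γ {z : ℂ | ∃ m n : ℤ, z = m + n * (ω' / ω)} := by
  have hω : ω ≠ 0 := by
    rintro rfl; simp at him
  have hω' : ω' ≠ 0 := by
    rintro rfl; simp at him
  have hre1 : -(1/2 : ℝ) ≤ (ω' / ω).re := (abs_le.mp hre).1
  have hre2 : (ω' / ω).re ≤ 1/2 := (abs_le.mp hre).2
  by_cases hA : ‖ω' / ω‖ = 1 ∧ (ω' / ω).re < 0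
  · -- apply S : new pair (ω', -ω), τ ↦ -1/τ
    obtain ⟨hA1, hA2⟩ := hA
    set τ := ω' / ω with hτ
    have hns : Complex.normSq τ = 1 := by
      have : ‖τ‖ ^ 2 = 1 := by rw [hA1]; norm_num
      rwa [Complex.sq_norm] at this
    have hτ' : -ω / ω' = -τ⁻¹ := by
      rw [hτ, inv_div, neg_div]
    have hrenew : (-ω / ω').re = -τ.re := by
      rw [hτ', Complex.neg_re, Complex.inv_re, hns]; field_simp
    have himnew : (-ω / ω').im = τ.im := by
      rw [hτ', Complex.neg_im, Complex.inv_im, hns]; field_simp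
    have habsnew : ‖-ω / ω'‖ = 1 := by
      rw [hτ', norm_neg, norm_inv, hA1]; norm_num
    have hg2 : Γ = {z : ℂ | ∃ m n : ℤ, z = m * ω' + n * -ω} := by
      rw [hgen]; ext z
      constructor
      · rintro ⟨m, n, rfl⟩; exact ⟨n, -m, by push_cast; ring⟩
      · rintro ⟨m, n, rfl⟩; exact ⟨-n, m, by push_cast; ring⟩
    refine ⟨ω', -ω, li_of_im _ _ hω' (by rw [himnew]; exact ne_of_gt him), hg2, ?_, ?_, ?_, ?_, ?_, ?_⟩
    · rw [himnew]; exact him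
    · rw [hrenew]; linarith
    · rw [hrenew]; linarith
    · rw [habsnew]
    · intro _; rw [hrenew]; linarith
    · rw [hg2]; exact gen_bijOn ω' (-ω) hω'
  · by_cases hB : (ω' / ω).re = -(1/2)
    · -- apply T : new pair (ω, ω' + ω), τ ↦ τ + 1
      set τ := ω' / ω with hτ
      have hτ' : (ω' + ω) / ω = τ + 1 := by
        rw [add_div, div_self hω]
      have hrenew : ((ω' + ω) / ω).re = τ.re + 1 := by rw [hτ']; simp
      have himnew : ((ω' + ω) / ω).im = τ.im := by rw [hτ']; simp
      have hnseq : Complex.normSq (τ + 1) = Complex.normSq τ := by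
        rw [Complex.normSq_apply, Complex.normSq_apply]
        simp only [Complex.add_re, Complex.add_im, Complex.one_re, Complex.one_im]
        rw [show τ.re = -(1/2) from hB]; ring
      have habsnew : ‖(ω' + ω) / ω‖ = ‖τ‖ := by
        rw [hτ', Complex.norm_def, Complex.norm_def, hnseq]
      have hg2 : Γ = {z : ℂ | ∃ m n : ℤ, z = m * ω + n * (ω' + ω)} := by
        rw [hgen]; ext z
        constructor
        · rintro ⟨m, n, rfl⟩; exact ⟨m - n, n, by push_cast; ring⟩
        · rintro ⟨m, n, rfl⟩; exact ⟨m + n, n, by push_cast; ring⟩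
      refine ⟨ω, ω' + ω, li_of_im _ _ hω (by rw [himnew]; exact ne_of_gt him), hg2, ?_, ?_, ?_, ?_, ?_, ?_⟩
      · rw [himnew]; exact him
      · rw [hrenew, hB]; norm_num
      · rw [hrenew, hB]; norm_num
      · rw [habsnew]; exact habs
      · intro _; rw [hrenew, hB]; norm_num
      · rw [hg2]; exact gen_bijOn ω (ω' + ω) hω
    · -- no change needed
      have h1 : -(1/2 : ℝ) < (ω' / ω).re := lt_of_le_of_ne hre1 (Ne.symm hB)
      refine ⟨ω, ω', li_of_im _ _ hω (ne_of_gt him), hgen, him, h1, hre2, habs, ?_, ?_⟩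
      · intro habs1
        by_contra hneg
        exact hA ⟨habs1, lt_of_not_ge hneg⟩
      · rw [hgen]; exact gen_bijOn ω ω' hω

theorem stmt_10 (Γ : Set ℂ)
    (hΓ : ∃ ω ω' : ℂ, LinearIndependent ℝ ![ω, ω'] ∧
      Γ = {z : ℂ | ∃ m n : ℤ, z = m * ω + n * ω'}) :
    ∃ ω ω' : ℂ, LinearIndependent ℝ ![ω, ω'] ∧
      Γ = {z : ℂ | ∃ m n : ℤ, z = m * ω + n * ω'} ∧
      0 < (ω' / ω).im ∧ -(1/2) < (ω' / ω).re ∧ (ω' / ω).re ≤ 1/2 ∧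
      1 ≤ ‖ω' / ω‖ ∧
      (‖ω' / ω‖ = 1 → 0 ≤ (ω' / ω).re) ∧
      Set.BijOn (fun z => z / ω) Γ {z : ℂ | ∃ m n : ℤ, z = m + n * (ω' / ω)} := by
  obtain ⟨ω₀, ω₀', hli, hgen⟩ := hΓ
  have hω₀ : ω₀ ≠ 0 := by
    intro h
    exact (hli.ne_zero 0) (by simp [h])
  have hω₀' : ω₀' ≠ 0 := by
    intro h
    exact (hli.ne_zero 1) (by simp [h])
  -- Step 1: get a pair with positive imaginary part of the ratio
  have him0 : (ω₀' / ω₀).im ≠ 0 := by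
    intro h
    have hτr : ω₀' / ω₀ = ((ω₀' / ω₀).re : ℂ) := by
      apply Complex.ext <;> simp [h]
    have hreal : ((ω₀' / ω₀).re : ℝ) • ω₀ + (-1 : ℝ) • ω₀' = 0 := by
      rw [Complex.real_smul, Complex.real_smul, ← hτr, div_mul_cancel₀ _ hω₀]
      push_cast
      ring
    have := (LinearIndependent.pair_iff.mp hli) _ _ hreal
    norm_num at this
  obtain ⟨ω₁, ω₁', hgen1, him1⟩ :
      ∃ ω₁ ω₁' : ℂ, Γ = {z : ℂ | ∃ m n : ℤ, z = m * ω₁ + n * ω₁'} ∧ 0 < (ω₁' / ω₁).im := by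
    rcases lt_or_gt_of_ne him0 with h | h
    · refine ⟨ω₀', ω₀, ?_, ?_⟩
      · rw [hgen]; ext z
        constructor
        · rintro ⟨m, n, rfl⟩; exact ⟨n, m, by ring⟩
        · rintro ⟨m, n, rfl⟩; exact ⟨n, m, by ring⟩
      · have : ω₀ / ω₀' = (ω₀' / ω₀)⁻¹ := (inv_div _ _).symm
        rw [this, Complex.inv_im]
        have hns : 0 < Complex.normSq (ω₀' / ω₀) :=
          Complex.normSq_pos.mpr (div_ne_zero hω₀' hω₀)
        exact div_pos (by linarith) hns
    · exact ⟨ω₀, ω₀', hgen, h⟩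
  have hω₁ : ω₁ ≠ 0 := by rintro rfl; simp at him1
  -- Step 2: move into the fundamental domain by the modular group
  set z : ℍ := ⟨ω₁' / ω₁, him1⟩ with hz
  obtain ⟨g, hg⟩ := ModularGroup.exists_smul_mem_fd z
  set a : ℤ := g 0 0 with ha
  set b : ℤ := g 0 1 with hb
  set c : ℤ := g 1 0 with hc
  set d : ℤ := g 1 1 with hd
  have hdet : a * d - b * c = 1 := by
    have := g.2
    rw [Matrix.det_fin_two] at this
    exact this
  have hcoe : ((g • z : ℍ) : ℂ) = ((a : ℂ) * z + b) / ((c : ℂ) * z + d) := by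
    rw [sl_moeb, UpperHalfPlane.coe_smul_of_det_pos (by simp)]
    simp [UpperHalfPlane.num, UpperHalfPlane.denom, ha, hb, hc, hd]
  have hden : ((c : ℂ) * z + d) ≠ 0 := by
    have := UpperHalfPlane.denom_ne_zero (g : GL(2,ℝ)⁺) z
    simpa [UpperHalfPlane.denom, hc, hd] using this
  set ω₂ : ℂ := (c : ℂ) * ω₁' + (d : ℂ) * ω₁ with hω₂def
  set ω₂' : ℂ := (a : ℂ) * ω₁' + (b : ℂ) * ω₁ with hω₂'def
  have hω₂ne : ω₂ ≠ 0 := by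
    intro h
    apply hden
    have : ((c : ℂ) * (ω₁' / ω₁) + d) * ω₁ = ω₂ := by field_simp [hω₂def]; rw [hω₂def]; ring
    rw [h] at this
    rcases mul_eq_zero.mp this with h' | h'
    · simpa [hz] using h'
    · exact absurd h' hω₁
  have hτ₂ : ω₂' / ω₂ = ((g • z : ℍ) : ℂ) := by
    rw [hcoe]
    have hzc : (z : ℂ) = ω₁' / ω₁ := rfl
    rw [hzc, hω₂'def, hω₂def]
    rw [div_eq_div_iff hω₂ne]
    · field_simp
      rw [hω₂def]; ring
    · intro h
      apply hden
      rw [hzc]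
      exact h
  have hgen2 : Γ = {w : ℂ | ∃ m n : ℤ, w = m * ω₂ + n * ω₂'} := by
    rw [hgen1]; ext w
    constructor
    · rintro ⟨m, n, rfl⟩
      refine ⟨a * m - b * n, -(c * m) + d * n, ?_⟩
      rw [hω₂def, hω₂'def]
      have hdC : (a : ℂ) * d - (b : ℂ) * c = 1 := by exact_mod_cast hdet
      push_cast
      linear_combination (-((m : ℂ) * ω₁ + (n : ℂ) * ω₁')) * hdC
    · rintro ⟨m, n, rfl⟩
      exact ⟨m * d + n * b, m * c + n * a, by rw [hω₂def, hω₂'def]; push_cast; ring⟩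
  obtain ⟨h𝒟1, h𝒟2⟩ := hg
  have him2 : 0 < (ω₂' / ω₂).im := by
    rw [hτ₂]
    exact (g • z).2
  have habs2 : 1 ≤ ‖ω₂' / ω₂‖ := by
    rw [hτ₂]
    have h1 : 1 ≤ Complex.normSq ((g • z : ℍ) : ℂ) := h𝒟1
    rw [← Complex.sq_norm] at h1
    nlinarith [norm_nonneg ((g • z : ℍ) : ℂ)]
  have hre2 : |(ω₂' / ω₂).re| ≤ 1 / 2 := by
    rw [hτ₂]
    exact h𝒟2
  exact final_step Γ ω₂ ω₂' hgen2 him2 habs2 hre2
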